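/- In the m-erasure reversible pebble game, there is a winning strategy reaching node m·2^n using n+2 pebbles and at most m-1 erasure moves, for every m ≥ 1 and n ≥ 0. -/

import Mathlib

/-- A state of the erasure pebble game: the set of pebbled nodes (node 0 is
permanently pebbled) together with the number of erasure moves used so far. -/
abbrev EState := Finset ℕ × ℕ

/-- One move of the `m`-erasure reversible pebble game with `n` movable
pebbles: place a free pebble on node `i+1` or remove the pebble from node
`i+1` when node `i` is pebbled (no erasure charged), or remove a pebble from
a node `i > 1` whose predecessor `i-1` is unpebbled (one erasure charged). -/
def EStep (n : ℕ) (s s' : EState) : Prop :=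
  (∃ i, i ∈ s.1 ∧ i + 1 ∉ s.1 ∧ s.1.card < n + 1 ∧
      s' = (insert (i + 1) s.1, s.2)) ∨
  (∃ i, i ∈ s.1 ∧ i + 1 ∈ s.1 ∧ s' = (s.1.erase (i + 1), s.2)) ∨
  (∃ i, i ∈ s.1 ∧ 1 < i ∧ i - 1 ∉ s.1 ∧ s' = (s.1.erase i, s.2 + 1))

/-- Reachability from the initial state: only node 0 pebbled, no erasures. -/
def EReachable (n : ℕ) (s : EState) : Prop :=
  Relation.ReflTransGen (EStep n) ({0}, 0) s

lemma pebble_seg (N : ℕ) : ∀ k a : ℕ, ∀ s : Finset ℕ, ∀ e : ℕ,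
    a ∈ s → (∀ x, a < x → x ≤ a + 2 ^ k → x ∉ s) → s.card + (k + 1) ≤ N + 1 →
    Relation.ReflTransGen (EStep N) (s, e) (insert (a + 2 ^ k) s, e) ∧
    Relation.ReflTransGen (EStep N) (insert (a + 2 ^ k) s, e) (s, e) := by
  intro k
  induction k with
  | zero =>
    intro a s e ha hfree hcard
    simp only [pow_zero]
    have h1 : a + 1 ∉ s := hfree (a + 1) (by omega) (by omega)
    constructor
    · exact Relation.ReflTransGen.single
        (Or.inl ⟨a, ha, h1, by simpa using (by omega : s.card < N + 1), rfl⟩)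
    · refine Relation.ReflTransGen.single (Or.inr (Or.inl ⟨a, ?_, ?_, ?_⟩))
      · exact Finset.mem_insert_of_mem ha
      · exact Finset.mem_insert_self _ _
      · simp [Finset.erase_insert, h1]
  | succ k ih =>
    intro a s e ha hfree hcard
    have hpos : 0 < 2 ^ k := Nat.pow_pos (by norm_num)
    have hbc : a + 2 ^ k + 2 ^ k = a + 2 ^ (k + 1) := by
      rw [pow_succ]; omega
    have hb : a + 2 ^ k ∉ s := hfree _ (by omega) (by rw [pow_succ]; omega)
    have hc : a + 2 ^ (k + 1) ∉ s := hfree _ (by rw [pow_succ] at *; omega) le_rfl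
    have h1 := ih a s e ha
      (fun x hx hx2 => hfree x hx (by rw [pow_succ]; omega)) (by omega)
    have h2 := ih (a + 2 ^ k) (insert (a + 2 ^ k) s) e (Finset.mem_insert_self _ _)
      (fun x hx hx2 => by
        simp only [Finset.mem_insert, not_or]
        exact ⟨by omega, hfree x (by omega) (by rw [pow_succ]; omega)⟩)
      (by rw [Finset.card_insert_of_notMem hb]; omega)
    have h3 := ih a (insert (a + 2 ^ (k + 1)) s) e (Finset.mem_insert_of_mem ha)
      (fun x hx hx2 => by
        simp only [Finset.mem_insert, not_or]
        exact ⟨by rw [pow_succ] at *; omega, hfree x hx (by rw [pow_succ]; omega)⟩)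
      (by rw [Finset.card_insert_of_notMem hc]; omega)
    have hcomm : insert (a + 2 ^ k + 2 ^ k) (insert (a + 2 ^ k) s)
        = insert (a + 2 ^ k) (insert (a + 2 ^ (k + 1)) s) := by
      rw [hbc]
      ext x
      simp only [Finset.mem_insert]
      tauto
    constructor
    · refine (h1.1.trans h2.1).trans ?_
      rw [hcomm]
      exact h3.2
    · refine (h3.1.trans ?_).trans h1.2
      rw [← hcomm]
      exact h2.2

lemma reach_block (n : ℕ) : ∀ m : ℕ, 1 ≤ m →
    ∃ e : ℕ, EReachable (n + 2) ({0, m * 2 ^ n}, e) ∧ e ≤ m - 1 := by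
  intro m hm
  induction m, hm using Nat.le_induction with
  | base =>
    refine ⟨0, ?_, le_rfl⟩
    have h := (pebble_seg (n + 2) n 0 {0} 0 (Finset.mem_singleton_self 0)
      (fun x hx _ => by simp; omega) (by simp; omega)).1
    have heq : ({0, 1 * 2 ^ n} : Finset ℕ) = insert (0 + 2 ^ n) {0} := by
      simp [Finset.pair_comm]
    rw [EReachable, heq]
    exact h
  | succ j hj ih =>
    obtain ⟨e, hre, he⟩ := ih
    have hpos : 0 < 2 ^ n := Nat.pow_pos (by norm_num)
    set a := j * 2 ^ n with hadef
    have ha1 : 1 ≤ a := by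
      have : 1 * 1 ≤ j * 2 ^ n := Nat.mul_le_mul hj hpos
      simpa using this
    have hseg := (pebble_seg (n + 2) n a {0, a} e (by simp)
      (fun x hx hx2 => by
        simp only [Finset.mem_insert, Finset.mem_singleton, not_or]
        exact ⟨by omega, by omega⟩)
      (by rw [Finset.card_insert_of_notMem (by simp only [Finset.mem_singleton]; omega), Finset.card_singleton]; omega)).1
    have hsucc : (j + 1) * 2 ^ n = a + 2 ^ n := by rw [hadef, add_mul, one_mul]
    have hkey : ({0, (j + 1) * 2 ^ n} : Finset ℕ)
        = Finset.erase (insert (a + 2 ^ n) {0, a}) a := by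
      ext x
      simp only [Finset.mem_erase, Finset.mem_insert, Finset.mem_singleton, hsucc]
      constructor
      · rintro (rfl | rfl) <;> omega
      · rintro ⟨hxa, (rfl | rfl | rfl)⟩ <;> omega
    rcases eq_or_lt_of_le ha1 with h1 | h1
    · -- a = 1 : free removal of node 1 (node 0 pebbled)
      refine ⟨e, ?_, by omega⟩
      refine (hre.trans hseg).tail (Or.inr (Or.inl ⟨0, ?_, ?_, ?_⟩))
      · simp
      · simp only [zero_add]; rw [← h1]; simp
      · simp only [zero_add, Prod.mk.injEq]
        refine ⟨?_, trivial⟩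
        rw [hkey, ← h1]
    · -- a > 1 : erasure move on node a
      refine ⟨e + 1, ?_, by omega⟩
      refine (hre.trans hseg).tail (Or.inr (Or.inr ⟨a, ?_, h1, ?_, ?_⟩))
      · simp
      · simp only [Finset.mem_insert, Finset.mem_singleton, not_or]
        exact ⟨by omega, by omega, by omega⟩
      · simp only [Prod.mk.injEq]
        exact ⟨hkey, trivial⟩

/-- In the erasure pebble game, node `m·2^n` can be pebbled using `n+2`
pebbles and at most `m-1` erasure moves, for every `m ≥ 1`. -/
theorem erasure_pebble_strategy (m n : ℕ) (hm : 1 ≤ m) :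
    ∃ s : EState, EReachable (n + 2) s ∧ m * 2 ^ n ∈ s.1 ∧ s.2 ≤ m - 1 := by
  obtain ⟨e, h1, h2⟩ := reach_block n m hm
  exact ⟨({0, m * 2 ^ n}, e), h1, by simp, h2⟩
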